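/- Let f be holomorphic on a sector A = {re^{iθ} : r > r₀, |θ − π| ≤ π/2 − ε} and suppose |f′(z)|/(1+|f(z)|²) ≤ (1/2)e^{−k|z|} on A for some k > 0. Then f has a limit a ∈ Ĉ as z → ∞ in A in the spherical metric, and the spherical distance from a to f(z) is at most (1/k)e^{−k r₀} for z ∈ A (suitably interpreted along radial paths). -/

import Mathlib

open Real Complex

/-- The chordal (spherical) metric on the Riemann sphere, modelled as `Option ℂ`
with `none` as the point at infinity. -/
noncomputable def sphChordal (a b : Option ℂ) : ℝ :=
  Option.elim a
    (Option.elim b 0 fun w => 2 / Real.sqrt (1 + ‖w‖ ^ 2))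
    (fun z => Option.elim b (2 / Real.sqrt (1 + ‖z‖ ^ 2)) fun w =>
      2 * ‖z - w‖ /
        (Real.sqrt (1 + ‖z‖ ^ 2) * Real.sqrt (1 + ‖w‖ ^ 2)))

noncomputable def sPhi (w : ℂ) : WithLp 2 (ℂ × ℝ) :=
  (WithLp.equiv 2 (ℂ × ℝ)).symm
    (2 * w / ((1 + Complex.normSq w : ℝ) : ℂ),
      (Complex.normSq w - 1) / (Complex.normSq w + 1))

noncomputable def sNorth : WithLp 2 (ℂ × ℝ) := (WithLp.equiv 2 (ℂ × ℝ)).symm (0, 1)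

lemma sphV_norm (x : WithLp 2 (ℂ × ℝ)) :
    ‖x‖ = Real.sqrt (‖x.fst‖ ^ 2 + x.snd ^ 2) := by
  rw [WithLp.prod_norm_eq_of_L2]
  norm_num [Real.norm_eq_abs, sq_abs]

lemma one_add_normSq_pos (w : ℂ) : 0 < 1 + Complex.normSq w :=
  add_pos_of_pos_of_nonneg one_pos (Complex.normSq_nonneg w)

lemma normSq_two : Complex.normSq 2 = 4 := by norm_num [Complex.normSq_apply]

lemma norm_sub_sPhi (p q : ℂ) :
    ‖sPhi p - sPhi q‖ = 2 * ‖p - q‖ /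
      (Real.sqrt (1 + ‖p‖ ^ 2) * Real.sqrt (1 + ‖q‖ ^ 2)) := by
  have hp := one_add_normSq_pos p
  have hq := one_add_normSq_pos q
  have hp' : (1 : ℝ) + Complex.normSq p ≠ 0 := hp.ne'
  have hq' : (1 : ℝ) + Complex.normSq q ≠ 0 := hq.ne'
  have hpc : ((1 + Complex.normSq p : ℝ) : ℂ) ≠ 0 := by exact_mod_cast hp'
  have hqc : ((1 + Complex.normSq q : ℝ) : ℂ) ≠ 0 := by exact_mod_cast hq'
  rw [sphV_norm]
  have h1 : (sPhi p - sPhi q).fst =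
      2 * p / ((1 + Complex.normSq p : ℝ) : ℂ) - 2 * q / ((1 + Complex.normSq q : ℝ) : ℂ) := rfl
  have h2 : (sPhi p - sPhi q).snd =
      (Complex.normSq p - 1) / (Complex.normSq p + 1) -
        (Complex.normSq q - 1) / (Complex.normSq q + 1) := rfl
  rw [h1, h2]
  have hnum : Complex.normSq (2 * p * ((1 + Complex.normSq q : ℝ) : ℂ) -
        2 * q * ((1 + Complex.normSq p : ℝ) : ℂ)) =
      4 * Complex.normSq p * (1 + Complex.normSq q) ^ 2 +
        4 * Complex.normSq q * (1 + Complex.normSq p) ^ 2 -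
        8 * (1 + Complex.normSq q) * (1 + Complex.normSq p) * (p * (starRingEnd ℂ) q).re := by
    rw [Complex.normSq_sub]
    have e1 : Complex.normSq (2 * p * ((1 + Complex.normSq q : ℝ) : ℂ)) =
        4 * Complex.normSq p * (1 + Complex.normSq q) ^ 2 := by
      rw [Complex.normSq_mul, Complex.normSq_mul, Complex.normSq_ofReal, normSq_two]; ring
    have e2 : Complex.normSq (2 * q * ((1 + Complex.normSq p : ℝ) : ℂ)) =
        4 * Complex.normSq q * (1 + Complex.normSq p) ^ 2 := by
      rw [Complex.normSq_mul, Complex.normSq_mul, Complex.normSq_ofReal, normSq_two]; ring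
    have e3 : ((2 * p * ((1 + Complex.normSq q : ℝ) : ℂ)) *
          (starRingEnd ℂ) (2 * q * ((1 + Complex.normSq p : ℝ) : ℂ))).re =
        4 * (1 + Complex.normSq q) * (1 + Complex.normSq p) * (p * (starRingEnd ℂ) q).re := by
      have e4 : (2 * p * ((1 + Complex.normSq q : ℝ) : ℂ)) *
          (starRingEnd ℂ) (2 * q * ((1 + Complex.normSq p : ℝ) : ℂ)) =
          ((4 * (1 + Complex.normSq q) * (1 + Complex.normSq p) : ℝ) : ℂ) *
            (p * (starRingEnd ℂ) q) := by
        simp only [map_mul, Complex.conj_ofReal, map_ofNat]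
        push_cast
        ring
      rw [e4, Complex.mul_re]
      simp [Complex.ofReal_re, Complex.ofReal_im]
    rw [e1, e2, e3]; ring
  have hsnd : (Complex.normSq p - 1) / (Complex.normSq p + 1) -
      (Complex.normSq q - 1) / (Complex.normSq q + 1) =
      2 * (Complex.normSq p - Complex.normSq q) /
        ((1 + Complex.normSq p) * (1 + Complex.normSq q)) := by
    rw [div_sub_div _ _ (by linarith : (Complex.normSq p + 1) ≠ 0)
      (by linarith : (Complex.normSq q + 1) ≠ 0),
      div_eq_div_iff (mul_pos (show (0:ℝ) < Complex.normSq p + 1 by linarith)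
        (show (0:ℝ) < Complex.normSq q + 1 by linarith)).ne' (mul_pos hp hq).ne']
    ring
  have hfst : 2 * p / ((1 + Complex.normSq p : ℝ) : ℂ) -
      2 * q / ((1 + Complex.normSq q : ℝ) : ℂ) =
      (2 * p * ((1 + Complex.normSq q : ℝ) : ℂ) - 2 * q * ((1 + Complex.normSq p : ℝ) : ℂ)) /
        (((1 + Complex.normSq p : ℝ) : ℂ) * ((1 + Complex.normSq q : ℝ) : ℂ)) := by
    rw [div_sub_div _ _ hpc hqc]
    congr 1
    ring
  have key : ‖2 * p / ((1 + Complex.normSq p : ℝ) : ℂ) -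
        2 * q / ((1 + Complex.normSq q : ℝ) : ℂ)‖ ^ 2 +
      ((Complex.normSq p - 1) / (Complex.normSq p + 1) -
        (Complex.normSq q - 1) / (Complex.normSq q + 1)) ^ 2 =
      4 * Complex.normSq (p - q) /
        ((1 + Complex.normSq p) * (1 + Complex.normSq q)) := by
    rw [hfst, hsnd, Complex.sq_norm, map_div₀, Complex.normSq_mul, Complex.normSq_ofReal,
      Complex.normSq_ofReal, hnum, div_pow, Complex.normSq_sub]
    rw [div_add_div _ _ (mul_pos (mul_pos hp hp) (mul_pos hq hq)).ne'
      (pow_pos (mul_pos hp hq) 2).ne',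
      div_eq_div_iff (mul_pos (mul_pos (mul_pos hp hp) (mul_pos hq hq))
        (pow_pos (mul_pos hp hq) 2)).ne' (mul_pos hp hq).ne']
    ring
  rw [key]
  rw [show (1 + ‖p‖ ^ 2) = 1 + Complex.normSq p by rw [Complex.sq_norm],
    show (1 + ‖q‖ ^ 2) = 1 + Complex.normSq q by rw [Complex.sq_norm]]
  rw [show (4 : ℝ) * Complex.normSq (p - q) = (2 * ‖p - q‖) ^ 2 by
    rw [mul_pow, Complex.sq_norm]; ring]
  rw [Real.sqrt_div (by positivity), Real.sqrt_sq (by positivity), Real.sqrt_mul hp.le]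

lemma sPhi_hasDerivAt {w : ℝ → ℂ} {w' : ℂ} {t : ℝ} (hw : HasDerivAt w w' t) :
    ∃ D, HasDerivAt (fun s => sPhi (w s)) D t ∧
      ‖D‖ = 2 * ‖w'‖ / (1 + ‖w t‖ ^ 2) := by
  have hre : HasDerivAt (fun s => (w s).re) w'.re t := by
    exact Complex.reCLM.hasFDerivAt.comp_hasDerivAt t hw
  have him : HasDerivAt (fun s => (w s).im) w'.im t := by
    exact Complex.imCLM.hasFDerivAt.comp_hasDerivAt t hw
  set n : ℝ := Complex.normSq (w t) with hn_def
  set c : ℝ := (w' * (starRingEnd ℂ) (w t)).re with hc_def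
  have hn0 : 0 ≤ n := Complex.normSq_nonneg _
  have hn : HasDerivAt (fun s => Complex.normSq (w s)) (2 * c) t := by
    have h := (hre.mul hre).add (him.mul him)
    have hfe : (fun s => Complex.normSq (w s)) =
        fun s => (w s).re * (w s).re + (w s).im * (w s).im := by
      funext s; exact Complex.normSq_apply _
    rw [hfe]
    refine h.congr_deriv ?_
    rw [hc_def, Complex.mul_re]
    simp [Complex.conj_re, Complex.conj_im]
    ring
  have hne : ((1 + n : ℝ) : ℂ) ≠ 0 := by
    exact_mod_cast (by linarith : (1 : ℝ) + n ≠ 0)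
  have hdc : HasDerivAt (fun s => ((1 + Complex.normSq (w s) : ℝ) : ℂ)) ((2 * c : ℝ) : ℂ) t := by
    simpa [Function.comp_def] using Complex.ofRealCLM.hasFDerivAt.comp_hasDerivAt t (hn.const_add 1)
  have hc1 : HasDerivAt (fun s => 2 * w s / ((1 + Complex.normSq (w s) : ℝ) : ℂ))
      ((2 * w' * ((1 + n : ℝ) : ℂ) - 2 * w t * ((2 * c : ℝ) : ℂ)) / ((1 + n : ℝ) : ℂ) ^ 2) t :=
    (hw.const_mul 2).div hdc hne
  have hc2 : HasDerivAt (fun s => (Complex.normSq (w s) - 1) / (Complex.normSq (w s) + 1))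
      ((2 * c * (n + 1) - (n - 1) * (2 * c)) / (n + 1) ^ 2) t :=
    (hn.sub_const 1).div (hn.add_const 1) (by linarith)
  have hpair := hc1.prodMk hc2
  refine ⟨(WithLp.equiv 2 (ℂ × ℝ)).symm
    ((2 * w' * ((1 + n : ℝ) : ℂ) - 2 * w t * ((2 * c : ℝ) : ℂ)) / ((1 + n : ℝ) : ℂ) ^ 2,
     (2 * c * (n + 1) - (n - 1) * (2 * c)) / (n + 1) ^ 2), ?_, ?_⟩
  · have h := ((WithLp.prodContinuousLinearEquiv 2 ℝ ℂ ℝ).symm.toContinuousLinearMap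
      |>.hasFDerivAt).comp_hasDerivAt t hpair
    exact h
  · rw [sphV_norm]
    have hf1 : ((WithLp.equiv 2 (ℂ × ℝ)).symm
        ((2 * w' * ((1 + n : ℝ) : ℂ) - 2 * w t * ((2 * c : ℝ) : ℂ)) / ((1 + n : ℝ) : ℂ) ^ 2,
         (2 * c * (n + 1) - (n - 1) * (2 * c)) / (n + 1) ^ 2)).fst =
        (2 * w' * ((1 + n : ℝ) : ℂ) - 2 * w t * ((2 * c : ℝ) : ℂ)) / ((1 + n : ℝ) : ℂ) ^ 2 := rfl
    have hf2 : ((WithLp.equiv 2 (ℂ × ℝ)).symm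
        ((2 * w' * ((1 + n : ℝ) : ℂ) - 2 * w t * ((2 * c : ℝ) : ℂ)) / ((1 + n : ℝ) : ℂ) ^ 2,
         (2 * c * (n + 1) - (n - 1) * (2 * c)) / (n + 1) ^ 2)).snd =
        (2 * c * (n + 1) - (n - 1) * (2 * c)) / (n + 1) ^ 2 := rfl
    rw [hf1, hf2]
    have hpos : (0 : ℝ) < 1 + n := by linarith
    have hnum : Complex.normSq (2 * w' * ((1 + n : ℝ) : ℂ) - 2 * w t * ((2 * c : ℝ) : ℂ)) =
        4 * Complex.normSq w' * (1 + n) ^ 2 + 4 * n * (2 * c) ^ 2 -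
          8 * (1 + n) * (2 * c) * c := by
      rw [Complex.normSq_sub]
      have e1 : Complex.normSq (2 * w' * ((1 + n : ℝ) : ℂ)) =
          4 * Complex.normSq w' * (1 + n) ^ 2 := by
        rw [Complex.normSq_mul, Complex.normSq_mul, Complex.normSq_ofReal, normSq_two]; ring
      have e2 : Complex.normSq (2 * w t * ((2 * c : ℝ) : ℂ)) = 4 * n * (2 * c) ^ 2 := by
        rw [Complex.normSq_mul, Complex.normSq_mul, Complex.normSq_ofReal, normSq_two, hn_def]
        ring
      have e3 : ((2 * w' * ((1 + n : ℝ) : ℂ)) *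
          (starRingEnd ℂ) (2 * w t * ((2 * c : ℝ) : ℂ))).re = 4 * (1 + n) * (2 * c) * c := by
        have e4 : (2 * w' * ((1 + n : ℝ) : ℂ)) *
            (starRingEnd ℂ) (2 * w t * ((2 * c : ℝ) : ℂ)) =
            ((4 * (1 + n) * (2 * c) : ℝ) : ℂ) * (w' * (starRingEnd ℂ) (w t)) := by
          simp only [map_mul, Complex.conj_ofReal, map_ofNat]
          push_cast
          ring
        rw [e4, Complex.mul_re]
        simp [Complex.ofReal_re, Complex.ofReal_im, hc_def]
      rw [e1, e2, e3]; ring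
    have key : ‖(2 * w' * ((1 + n : ℝ) : ℂ) - 2 * w t * ((2 * c : ℝ) : ℂ)) /
          ((1 + n : ℝ) : ℂ) ^ 2‖ ^ 2 +
        ((2 * c * (n + 1) - (n - 1) * (2 * c)) / (n + 1) ^ 2) ^ 2 =
        (2 * ‖w'‖ / (1 + ‖w t‖ ^ 2)) ^ 2 := by
      rw [Complex.sq_norm, map_div₀, map_pow, Complex.normSq_ofReal, hnum]
      rw [show (1 + ‖w t‖ ^ 2) = 1 + n by rw [Complex.sq_norm, hn_def]]
      have hp1 : (0:ℝ) < n + 1 := by linarith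
      rw [show (2 * ‖w'‖ / (1 + n)) ^ 2 = 2 ^ 2 * Complex.normSq w' / (1 + n) ^ 2 by
        rw [div_pow, mul_pow, Complex.sq_norm]]
      rw [div_pow]
      rw [div_add_div _ _ (pow_pos (mul_pos hpos hpos) 2).ne' (pow_pos (pow_pos hp1 2) 2).ne',
        div_eq_div_iff (mul_pos (pow_pos (mul_pos hpos hpos) 2) (pow_pos (pow_pos hp1 2) 2)).ne'
          (pow_pos hpos 2).ne']
      ring
    rw [key, Real.sqrt_sq (by positivity)]

lemma norm_sub_sNorth (q : ℂ) :
    ‖sNorth - sPhi q‖ = 2 / Real.sqrt (1 + ‖q‖ ^ 2) := by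
  have hq := one_add_normSq_pos q
  rw [sphV_norm]
  have h1 : (sNorth - sPhi q).fst = 0 - 2 * q / ((1 + Complex.normSq q : ℝ) : ℂ) := rfl
  have h2 : (sNorth - sPhi q).snd =
      1 - (Complex.normSq q - 1) / (Complex.normSq q + 1) := rfl
  rw [h1, h2, zero_sub]
  have key : ‖-(2 * q / ((1 + Complex.normSq q : ℝ) : ℂ))‖ ^ 2 +
      (1 - (Complex.normSq q - 1) / (Complex.normSq q + 1)) ^ 2 =
      2 ^ 2 / (1 + Complex.normSq q) := by
    rw [norm_neg, Complex.sq_norm, map_div₀, Complex.normSq_mul, Complex.normSq_ofReal,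
      normSq_two]
    have hq1 : Complex.normSq q + 1 ≠ 0 := by linarith
    rw [show (1 : ℝ) - (Complex.normSq q - 1) / (Complex.normSq q + 1) =
        2 / (1 + Complex.normSq q) by field_simp; ring]
    rw [div_pow, div_add_div _ _ (mul_pos hq hq).ne' (pow_pos hq 2).ne',
      div_eq_div_iff (mul_pos (mul_pos hq hq) (pow_pos hq 2)).ne' hq.ne']
    ring
  rw [key, Real.sqrt_div (by norm_num), Real.sqrt_sq (by norm_num), Complex.sq_norm]

lemma norm_sPhi (w : ℂ) : ‖sPhi w‖ = 1 := by
  have hw := one_add_normSq_pos w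
  rw [sphV_norm]
  have h1 : (sPhi w).fst = 2 * w / ((1 + Complex.normSq w : ℝ) : ℂ) := rfl
  have h2 : (sPhi w).snd = (Complex.normSq w - 1) / (Complex.normSq w + 1) := rfl
  rw [h1, h2]
  have key : ‖2 * w / ((1 + Complex.normSq w : ℝ) : ℂ)‖ ^ 2 +
      ((Complex.normSq w - 1) / (Complex.normSq w + 1)) ^ 2 = 1 := by
    rw [Complex.sq_norm, map_div₀, Complex.normSq_mul, Complex.normSq_ofReal, normSq_two,
      div_pow, div_add_div _ _ (mul_pos hw hw).ne'
        (pow_pos (show (0:ℝ) < Complex.normSq w + 1 by linarith) 2).ne',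
      div_eq_one_iff_eq (mul_ne_zero (mul_pos hw hw).ne'
        (pow_pos (show (0:ℝ) < Complex.normSq w + 1 by linarith) 2).ne')]
    ring
  rw [key, Real.sqrt_one]

lemma norm_sub_sPhi_le (p q : ℂ) : ‖sPhi p - sPhi q‖ ≤ 2 * ‖p - q‖ := by
  rw [norm_sub_sPhi]
  have h1 : (1:ℝ) ≤ Real.sqrt (1 + ‖p‖ ^ 2) := by
    nlinarith [Real.sq_sqrt (show (0:ℝ) ≤ 1 + ‖p‖ ^ 2 by positivity),
      Real.sqrt_nonneg (1 + ‖p‖ ^ 2), sq_nonneg (‖p‖)]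
  have h2 : (1:ℝ) ≤ Real.sqrt (1 + ‖q‖ ^ 2) := by
    nlinarith [Real.sq_sqrt (show (0:ℝ) ≤ 1 + ‖q‖ ^ 2 by positivity),
      Real.sqrt_nonneg (1 + ‖q‖ ^ 2), sq_nonneg (‖q‖)]
  have hS : (1:ℝ) ≤ Real.sqrt (1 + ‖p‖ ^ 2) * Real.sqrt (1 + ‖q‖ ^ 2) := by
    nlinarith
  exact div_le_self (by positivity) hS

lemma sPhi_continuous : Continuous sPhi := by
  rw [Metric.continuous_iff]
  intro w ε hε
  refine ⟨ε / 2, by positivity, fun a ha => ?_⟩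
  have := norm_sub_sPhi_le a w
  rw [dist_eq_norm]
  calc ‖sPhi a - sPhi w‖ ≤ 2 * ‖a - w‖ := norm_sub_sPhi_le a w
    _ = 2 * dist a w := by rw [Complex.dist_eq]
    _ < 2 * (ε / 2) := by linarith [ha, dist_nonneg (x := a) (y := w)]
    _ = ε := by ring

lemma sPhi_surj {x : WithLp 2 (ℂ × ℝ)} (hx : ‖x‖ = 1) :
    x = sNorth ∨ ∃ w : ℂ, sPhi w = x := by
  have hsum : ‖x.fst‖ ^ 2 + x.snd ^ 2 = 1 := by
    have h := congrArg (· ^ 2) (sphV_norm x ▸ hx)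
    simpa [Real.sq_sqrt (by positivity : (0:ℝ) ≤ ‖x.fst‖ ^ 2 + x.snd ^ 2)] using h
  by_cases hs : x.snd = 1
  · left
    have hv : ‖x.fst‖ ^ 2 = 0 := by rw [hs] at hsum; linarith
    have hv0 : x.fst = 0 := by
      simpa using (pow_eq_zero_iff (n := 2) (by norm_num)).mp hv
    have : x = (WithLp.equiv 2 (ℂ × ℝ)).symm (0, 1) := by
      rw [Equiv.eq_symm_apply]
      exact Prod.ext (by exact hv0) (by exact hs)
    exact this
  · right
    set s := x.snd with hs_def
    have hs1 : (1:ℝ) - s ≠ 0 := sub_ne_zero.mpr (Ne.symm hs)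
    have hs1c : ((1 - s : ℝ) : ℂ) ≠ 0 := by exact_mod_cast hs1
    refine ⟨x.fst / ((1 - s : ℝ) : ℂ), ?_⟩
    have hnw : Complex.normSq (x.fst / ((1 - s : ℝ) : ℂ)) = (1 - s ^ 2) / (1 - s) ^ 2 := by
      rw [map_div₀, Complex.normSq_ofReal]
      have : Complex.normSq x.fst = 1 - s ^ 2 := by
        rw [← Complex.sq_norm]; linarith
      rw [this]; ring_nf
    have hden : (1:ℝ) + (1 - s ^ 2) / (1 - s) ^ 2 = 2 / (1 - s) := by
      field_simp
      ring
    apply (WithLp.equiv 2 (ℂ × ℝ)).injective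
    rw [sPhi, Equiv.apply_symm_apply]
    refine Prod.ext ?_ ?_
    · show _ = x.fst
      show 2 * (x.fst / ((1 - s : ℝ) : ℂ)) /
        ((1 + Complex.normSq (x.fst / ((1 - s : ℝ) : ℂ)) : ℝ) : ℂ) = x.fst
      rw [hnw, hden]
      rw [Complex.ofReal_div, ← mul_div_assoc, div_div_div_eq]
      push_cast
      have hc2 : (1:ℂ) - (s:ℂ) ≠ 0 := by exact_mod_cast hs1
      rw [div_eq_iff (mul_ne_zero hc2 two_ne_zero)]
      ring
    · show _ = x.snd
      show (Complex.normSq (x.fst / ((1 - s : ℝ) : ℂ)) - 1) /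
        (Complex.normSq (x.fst / ((1 - s : ℝ) : ℂ)) + 1) = s
      rw [hnw]
      rw [show (1 - s ^ 2) / (1 - s) ^ 2 - 1 = 2 * s / (1 - s) by field_simp; ring,
        show (1 - s ^ 2) / (1 - s) ^ 2 + 1 = 2 / (1 - s) by field_simp; ring]
      field_simp
      

lemma sector_abs_arg {t θ : ℝ} (ht : 0 < t) (hθ : |θ - π| ≤ π / 2) :
    ‖(t : ℂ) * Complex.exp ((θ : ℂ) * Complex.I)‖ = t ∧
      Complex.arg (-((t : ℂ) * Complex.exp ((θ : ℂ) * Complex.I))) = θ - π := by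
  have habs : ‖(t : ℂ) * Complex.exp ((θ : ℂ) * Complex.I)‖ = t := by
    rw [norm_mul, Complex.norm_real, Real.norm_eq_abs, Complex.norm_exp_ofReal_mul_I, abs_of_pos ht, mul_one]
  refine ⟨habs, ?_⟩
  have hexp : Complex.exp (((θ - π : ℝ) : ℂ) * Complex.I) =
      Complex.cos ((θ - π : ℝ) : ℂ) + Complex.sin ((θ - π : ℝ) : ℂ) * Complex.I :=
    Complex.exp_mul_I _
  have hneg : Complex.exp (((θ - π : ℝ) : ℂ) * Complex.I) = -Complex.exp ((θ : ℂ) * Complex.I) := by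
    push_cast
    rw [sub_mul, Complex.exp_sub, Complex.exp_pi_mul_I, div_neg, div_one]
  have hrw : -((t : ℂ) * Complex.exp ((θ : ℂ) * Complex.I)) =
      (t : ℂ) * (Complex.cos ((θ - π : ℝ) : ℂ) + Complex.sin ((θ - π : ℝ) : ℂ) * Complex.I) := by
    rw [← hexp, hneg]
    ring
  rw [hrw]
  apply Complex.arg_mul_cos_add_sin_mul_I ht
  constructor
  · have := abs_le.mp hθ
    nlinarith [Real.pi_pos]
  · have := abs_le.mp hθ
    nlinarith [Real.pi_pos]

theorem limit_in_sector_of_exponential_spherical_decay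
    (ε r₀ k : ℝ) (hε : 0 < ε) (hε' : ε < π / 2) (hr₀ : 0 < r₀) (hk : 0 < k)
    (A : Set ℂ)
    (hA : A = {z : ℂ | ∃ r θ : ℝ, r > r₀ ∧ |θ - π| ≤ π / 2 - ε ∧
      z = (r : ℂ) * Complex.exp (θ * Complex.I)})
    (f : ℂ → ℂ) (hf : DifferentiableOn ℂ f A)
    (hdecay : ∀ z ∈ A,
      ‖deriv f z‖ / (1 + ‖f z‖ ^ 2) ≤
        (1 / 2) * Real.exp (-k * ‖z‖)) :
    ∃ a : Option ℂ, ∀ z ∈ A, sphChordal a (some (f z)) ≤ (1 / k) * Real.exp (-k * r₀) := by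
  have hc : 0 < π / 2 - ε := by linarith
  have hc2 : π / 2 - ε ≤ π / 2 := by linarith
  -- membership lemmas
  have hmemA : ∀ t θ : ℝ, r₀ < t → |θ - π| ≤ π / 2 - ε →
      (t : ℂ) * Complex.exp ((θ : ℂ) * Complex.I) ∈ A := by
    intro t θ h1 h2
    rw [hA]
    exact ⟨t, θ, h1, h2, rfl⟩
  set S : Set ℂ := {z : ℂ | r₀ < ‖z‖ ∧ |Complex.arg (-z)| < π / 2 - ε} with hS_def
  have hmemS : ∀ t θ : ℝ, r₀ < t → |θ - π| < π / 2 - ε →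
      (t : ℂ) * Complex.exp ((θ : ℂ) * Complex.I) ∈ S := by
    intro t θ h1 h2
    obtain ⟨habs, harg⟩ := sector_abs_arg (hr₀.trans h1) (h2.le.trans hc2)
    exact ⟨by rw [habs]; exact h1, by rw [harg]; exact h2⟩
  have hSabs : ∀ t θ : ℝ, 0 < t → |θ - π| ≤ π / 2 →
      ‖(t : ℂ) * Complex.exp ((θ : ℂ) * Complex.I)‖ = t :=
    fun t θ h1 h2 => (sector_abs_arg h1 h2).1
  -- representation of points of S
  have hrepr : ∀ z : ℂ, z ≠ 0 →
      z = ((‖z‖ : ℝ) : ℂ) *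
        Complex.exp (((Complex.arg (-z) + π : ℝ) : ℂ) * Complex.I) := by
    intro z hz
    have h0 : (-z) ≠ 0 := neg_ne_zero.mpr hz
    have habs : ‖-z‖ = ‖z‖ := by simp
    have h1 := Complex.norm_mul_exp_arg_mul_I (-z)
    rw [habs] at h1
    have h2 : Complex.exp (((Complex.arg (-z) + π : ℝ) : ℂ) * Complex.I) =
        -Complex.exp ((Complex.arg (-z) : ℂ) * Complex.I) := by
      push_cast
      rw [add_mul, Complex.exp_add, Complex.exp_pi_mul_I]
      ring
    rw [h2]
    rw [show ((‖z‖ : ℝ) : ℂ) * -Complex.exp ((Complex.arg (-z) : ℂ) * Complex.I) =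
      -(((‖z‖ : ℝ) : ℂ) * Complex.exp ((Complex.arg (-z) : ℂ) * Complex.I)) by ring]
    rw [h1]
    ring
  have hS_ne : ∀ z ∈ S, z ≠ 0 := by
    intro z hz h0
    have h1 : r₀ < ‖z‖ := hz.1
    rw [h0] at h1
    simp only [norm_zero] at h1
    linarith
  have hS_sub_A : S ⊆ A := by
    intro z hz
    rw [hA]
    refine ⟨‖z‖, Complex.arg (-z) + π, hz.1, by rw [add_sub_cancel_right]; exact hz.2.le, ?_⟩
    exact hrepr z (hS_ne z hz)
  have hSopen : IsOpen S := by
    rw [isOpen_iff_mem_nhds]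
    intro z hz
    have hzne := hS_ne z hz
    have hslit : (-z) ∈ Complex.slitPlane := by
      rw [Complex.mem_slitPlane_iff]
      have harg : |Complex.arg (-z)| < π / 2 := lt_of_lt_of_le hz.2 hc2
      rcases Complex.abs_arg_lt_pi_div_two_iff.mp harg with h | h
      · exact Or.inl h
      · exact absurd h (neg_ne_zero.mpr hzne)
    have hargc : ContinuousAt (fun w : ℂ => |Complex.arg (-w)|) z := by
      apply ContinuousAt.abs
      exact (Complex.continuousAt_arg hslit).comp (continuous_neg.continuousAt)
    have e1 : {w : ℂ | r₀ < ‖w‖} ∈ nhds z :=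
      continuous_norm.continuousAt.preimage_mem_nhds (Ioi_mem_nhds hz.1)
    have e2 : {w : ℂ | |Complex.arg (-w)| < π / 2 - ε} ∈ nhds z :=
      hargc.preimage_mem_nhds (Iio_mem_nhds hz.2)
    exact Filter.mem_of_superset (Filter.inter_mem e1 e2) (fun w hw => ⟨hw.1, hw.2⟩)
  have hfd : ∀ z ∈ S, HasDerivAt f (deriv f z) z := by
    intro z hz
    exact (((hf z (hS_sub_A hz)).mono hS_sub_A).differentiableAt
      (hSopen.mem_nhds hz)).hasDerivAt
  -- derivative bound along paths
  have hPath : ∀ (c : ℝ → ℂ) (c' : ℂ) (t : ℝ), HasDerivAt c c' t → c t ∈ S →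
      ∃ D, HasDerivAt (fun s => sPhi (f (c s))) D t ∧
        ‖D‖ ≤ Real.exp (-k * ‖c t‖) * ‖c'‖ := by
    intro c c' t hcd hct
    have hfz := hfd _ hct
    have hw : HasDerivAt (fun s => f (c s)) (deriv f (c t) * c') t := by
      have h := (hfz.hasFDerivAt.restrictScalars ℝ).comp_hasDerivAt t hcd
      simpa [Function.comp_def, mul_comm] using h
    obtain ⟨D, hD, hDnorm⟩ := sPhi_hasDerivAt hw
    refine ⟨D, hD, ?_⟩
    rw [hDnorm]
    have hb := hdecay (c t) (hS_sub_A hct)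
    have h1 : (0:ℝ) < 1 + ‖f (c t)‖ ^ 2 := by positivity
    calc 2 * ‖deriv f (c t) * c'‖ / (1 + ‖f (c t)‖ ^ 2)
        = (‖deriv f (c t)‖ / (1 + ‖f (c t)‖ ^ 2)) *
            (2 * ‖c'‖) := by rw [norm_mul]; ring
      _ ≤ ((1 / 2) * Real.exp (-k * ‖c t‖)) * (2 * ‖c'‖) :=
          mul_le_mul_of_nonneg_right hb (by positivity)
      _ = Real.exp (-k * ‖c t‖) * ‖c'‖ := by ring
  -- radial estimate
  have hrad : ∀ θ : ℝ, |θ - π| < π / 2 - ε → ∀ r R : ℝ, r₀ < r → r ≤ R →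
      ‖sPhi (f ((R : ℂ) * Complex.exp ((θ : ℂ) * Complex.I))) -
        sPhi (f ((r : ℂ) * Complex.exp ((θ : ℂ) * Complex.I)))‖ ≤
      (Real.exp (-k * r) - Real.exp (-k * R)) / k := by
    intro θ hθ r R h1 h2
    have hder : ∀ t : ℝ, t ∈ Set.Icc r R →
        ∃ D, HasDerivAt (fun s : ℝ => sPhi (f ((s : ℂ) * Complex.exp ((θ : ℂ) * Complex.I)))) D t ∧
          ‖D‖ ≤ Real.exp (-k * t) := by
      intro t ht
      have hcd : HasDerivAt (fun s : ℝ => (s : ℂ) * Complex.exp ((θ : ℂ) * Complex.I))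
          (Complex.exp ((θ : ℂ) * Complex.I)) t := by
        simpa using (Complex.ofRealCLM.hasFDerivAt.comp_hasDerivAt t
          (hasDerivAt_id t)).mul_const (Complex.exp ((θ : ℂ) * Complex.I))
      obtain ⟨D, hD, hle⟩ := hPath _ _ t hcd (hmemS t θ (lt_of_lt_of_le h1 ht.1) hθ)
      refine ⟨D, hD, ?_⟩
      rw [hSabs t θ (hr₀.trans (lt_of_lt_of_le h1 ht.1)) (hθ.le.trans hc2),
        Complex.norm_exp_ofReal_mul_I, mul_one] at hle
      exact hle
    choose! D hD hDle using hder
    have hB : ∀ x : ℝ, HasDerivAt (fun t => (Real.exp (-k * r) - Real.exp (-k * t)) / k)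
        (Real.exp (-k * x)) x := by
      intro x
      have h := ((hasDerivAt_id x).const_mul (-k)).exp
      have h2 := ((hasDerivAt_const x (Real.exp (-k * r))).sub h).div_const k
      refine h2.congr_deriv ?_
      field_simp
      simp
    have main := image_norm_le_of_norm_deriv_right_le_deriv_boundary
      (f := fun t : ℝ => sPhi (f ((t : ℂ) * Complex.exp ((θ : ℂ) * Complex.I))) -
        sPhi (f ((r : ℂ) * Complex.exp ((θ : ℂ) * Complex.I))))
      (f' := D) (a := r) (b := R)
      (fun t ht => ((hD t ht).sub_const _).continuousAt.continuousWithinAt)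
      (fun x hx => (((hD x ⟨hx.1, hx.2.le⟩).sub_const _)).hasDerivWithinAt)
      (B := fun t => (Real.exp (-k * r) - Real.exp (-k * t)) / k)
      (B' := fun t => Real.exp (-k * t))
      (by simp) hB (fun x hx => hDle x ⟨hx.1, hx.2.le⟩)
    simpa using main (Set.right_mem_Icc.mpr h2)
  -- arc estimate
  have harc : ∀ R : ℝ, r₀ < R → ∀ θ : ℝ, |θ - π| < π / 2 - ε →
      ‖sPhi (f ((R : ℂ) * Complex.exp ((θ : ℂ) * Complex.I))) -
        sPhi (f ((R : ℂ) * Complex.exp (((π : ℝ) : ℂ) * Complex.I)))‖ ≤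
      Real.exp (-k * R) * R * π := by
    intro R hR θ hθ
    have hmemuIcc : ∀ ψ ∈ Set.uIcc θ π, |ψ - π| < π / 2 - ε := by
      intro ψ hψ
      rw [abs_sub_lt_iff] at hθ ⊢
      rcases le_total θ π with h | h
      · rw [Set.uIcc_of_le h] at hψ
        exact ⟨by linarith [hψ.2, hθ.1], by linarith [hψ.1, hθ.2]⟩
      · rw [Set.uIcc_of_ge h] at hψ
        exact ⟨by linarith [hψ.2, hθ.1], by linarith [hψ.1, hθ.2]⟩
    have hder : ∀ ψ : ℝ, ψ ∈ Set.uIcc θ π →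
        ∃ D, HasDerivAt (fun s : ℝ => sPhi (f ((R : ℂ) * Complex.exp ((s : ℂ) * Complex.I)))) D ψ ∧
          ‖D‖ ≤ Real.exp (-k * R) * R := by
      intro ψ hψ
      have hinner : HasDerivAt (fun s : ℝ => (s : ℂ) * Complex.I) Complex.I ψ := by
        simpa using (Complex.ofRealCLM.hasFDerivAt.comp_hasDerivAt ψ
          (hasDerivAt_id ψ)).mul_const Complex.I
      have hcd : HasDerivAt (fun s : ℝ => (R : ℂ) * Complex.exp ((s : ℂ) * Complex.I))
          ((R : ℂ) * (Complex.exp ((ψ : ℂ) * Complex.I) * Complex.I)) ψ :=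
        (hinner.cexp).const_mul _
      obtain ⟨D, hD, hle⟩ := hPath _ _ ψ hcd (hmemS R ψ hR (hmemuIcc ψ hψ))
      refine ⟨D, hD, ?_⟩
      rw [hSabs R ψ (hr₀.trans hR) ((hmemuIcc ψ hψ).le.trans hc2)] at hle
      rw [show ‖(R : ℂ) * (Complex.exp ((ψ : ℂ) * Complex.I) * Complex.I)‖ = R by
        rw [norm_mul, norm_mul, Complex.norm_exp_ofReal_mul_I, Complex.norm_I, Complex.norm_real,
          Real.norm_eq_abs, abs_of_pos (hr₀.trans hR)]; ring] at hle
      exact hle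
    choose! D hD hDle using hder
    have main := Convex.norm_image_sub_le_of_norm_hasDerivWithin_le
      (f := fun s : ℝ => sPhi (f ((R : ℂ) * Complex.exp ((s : ℂ) * Complex.I))))
      (f' := D) (C := Real.exp (-k * R) * R)
      (fun ψ hψ => (hD ψ hψ).hasDerivWithinAt) (fun ψ hψ => hDle ψ hψ)
      (convex_uIcc θ π) Set.right_mem_uIcc Set.left_mem_uIcc
    calc ‖sPhi (f ((R : ℂ) * Complex.exp ((θ : ℂ) * Complex.I))) -
          sPhi (f ((R : ℂ) * Complex.exp (((π : ℝ) : ℂ) * Complex.I)))‖ ≤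
        Real.exp (-k * R) * R * ‖θ - π‖ := main
      _ ≤ Real.exp (-k * R) * R * π := by
          apply mul_le_mul_of_nonneg_left _
            (mul_nonneg (Real.exp_nonneg _) (hr₀.trans hR).le)
          rw [Real.norm_eq_abs]
          linarith [hθ, hc, hε', Real.pi_pos]
  -- the sequence along the negative real axis
  set u : ℕ → ℝ := fun j => r₀ + 1 + j with hu_def
  have hu_gt : ∀ j, r₀ < u j := by
    intro j
    have : (0:ℝ) ≤ j := Nat.cast_nonneg j
    simp only [hu_def]
    linarith
  have hu_mono : ∀ i j : ℕ, i ≤ j → u i ≤ u j := by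
    intro i j hij
    simp only [hu_def]
    have : (i:ℝ) ≤ j := Nat.cast_le.mpr hij
    linarith
  have hu_top : Filter.Tendsto u Filter.atTop Filter.atTop := by
    apply Filter.tendsto_atTop_add_const_left
    exact tendsto_natCast_atTop_atTop
  have hπ : |π - π| < π / 2 - ε := by simpa using hc
  set L : ℕ → WithLp 2 (ℂ × ℝ) :=
    fun j => sPhi (f ((u j : ℂ) * Complex.exp (((π : ℝ) : ℂ) * Complex.I))) with hL_def
  have hLdist : ∀ i j : ℕ, i ≤ j → ‖L j - L i‖ ≤ Real.exp (-k * u i) / k := by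
    intro i j hij
    calc ‖L j - L i‖ ≤ (Real.exp (-k * u i) - Real.exp (-k * u j)) / k :=
        hrad π hπ (u i) (u j) (hu_gt i) (hu_mono i j hij)
      _ ≤ Real.exp (-k * u i) / k := by
        apply div_le_div_of_nonneg_right _ hk.le
        linarith [Real.exp_nonneg (-k * u j)]
  have hexp0' : Filter.Tendsto (fun j => Real.exp (-k * u j)) Filter.atTop (nhds 0) := by
    have h1 : Filter.Tendsto (fun j => -k * u j) Filter.atTop Filter.atBot := by
      apply Filter.Tendsto.const_mul_atTop_of_neg (neg_neg_iff_pos.mpr hk) hu_top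
    exact Real.tendsto_exp_atBot.comp h1
  have hexp0 : Filter.Tendsto (fun j => Real.exp (-k * u j) / k) Filter.atTop (nhds 0) := by
    simpa using hexp0'.div_const k
  have hcauchy : CauchySeq L := by
    apply cauchySeq_of_le_tendsto_0 (b := fun N => Real.exp (-k * u N) / k) _ hexp0
    intro n m N hn hm
    rcases le_total n m with h | h
    · rw [dist_eq_norm, norm_sub_rev]
      refine (hLdist n m h).trans (div_le_div_of_nonneg_right (Real.exp_le_exp.mpr ?_) hk.le)
      have := hu_mono N n hn
      nlinarith
    · rw [dist_eq_norm, norm_sub_rev, norm_sub_rev]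
      refine (hLdist m n h).trans (div_le_div_of_nonneg_right (Real.exp_le_exp.mpr ?_) hk.le)
      have := hu_mono N m hm
      nlinarith
  obtain ⟨P, hP⟩ := cauchySeq_tendsto_of_complete hcauchy
  have hPnorm : ‖P‖ = 1 := by
    have h1 : Filter.Tendsto (fun j => ‖L j‖) Filter.atTop (nhds ‖P‖) := hP.norm
    have h2 : (fun j => ‖L j‖) = fun _ => (1:ℝ) := funext fun j => norm_sPhi _
    rw [h2] at h1
    exact tendsto_nhds_unique h1 tendsto_const_nhds
  have hkey : ∀ z ∈ S, ‖P - sPhi (f z)‖ ≤ 1 / k * Real.exp (-k * ‖z‖) := by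
    intro z hz
    set r : ℝ := ‖z‖ with hr_def
    set θ : ℝ := Complex.arg (-z) + π with hθ_def
    have hzeq : z = (r : ℂ) * Complex.exp ((θ : ℂ) * Complex.I) := hrepr z (hS_ne z hz)
    have hθlt : |θ - π| < π / 2 - ε := by rw [hθ_def, add_sub_cancel_right]; exact hz.2
    have hr : r₀ < r := hz.1
    have hev : ∀ᶠ j in Filter.atTop, ‖P - sPhi (f z)‖ ≤
        ‖P - L j‖ + Real.exp (-k * u j) * u j * π +
          (Real.exp (-k * r) - Real.exp (-k * u j)) / k := by
      filter_upwards [hu_top.eventually_ge_atTop r] with j hj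
      set G : WithLp 2 (ℂ × ℝ) := sPhi (f ((u j : ℂ) * Complex.exp ((θ : ℂ) * Complex.I)))
        with hG_def
      have t1 : ‖P - sPhi (f z)‖ ≤ ‖P - L j‖ + ‖L j - G‖ + ‖G - sPhi (f z)‖ := by
        calc ‖P - sPhi (f z)‖ = ‖(P - L j) + (L j - G) + (G - sPhi (f z))‖ := by
              congr 1
              abel
          _ ≤ ‖(P - L j) + (L j - G)‖ + ‖G - sPhi (f z)‖ := norm_add_le _ _
          _ ≤ ‖P - L j‖ + ‖L j - G‖ + ‖G - sPhi (f z)‖ := by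
              gcongr
              exact norm_add_le _ _
      have t2 : ‖L j - G‖ ≤ Real.exp (-k * u j) * u j * π := by
        rw [norm_sub_rev]
        exact harc (u j) (hu_gt j) θ hθlt
      have t3 : ‖G - sPhi (f z)‖ ≤ (Real.exp (-k * r) - Real.exp (-k * u j)) / k := by
        rw [hG_def, hzeq]
        exact hrad θ hθlt r (u j) hr hj
      refine t1.trans ?_
      gcongr
    have hT : Filter.Tendsto (fun j => ‖P - L j‖ + Real.exp (-k * u j) * u j * π +
        (Real.exp (-k * r) - Real.exp (-k * u j)) / k) Filter.atTop
        (nhds (0 + 0 + (Real.exp (-k * r) - 0) / k)) := by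
      refine Filter.Tendsto.add (Filter.Tendsto.add ?_ ?_) ?_
      · have h := (tendsto_const_nhds (x := P)).sub hP
        have h2 := h.norm
        simpa using h2
      · have h1 : Filter.Tendsto (fun j => k * u j) Filter.atTop Filter.atTop :=
          hu_top.const_mul_atTop hk
        have h2 := (Real.tendsto_pow_mul_exp_neg_atTop_nhds_zero 1).comp h1
        have h3 : ∀ j, ((fun x => x ^ 1 * Real.exp (-x)) ∘ fun j => k * u j) j * (π / k) =
            Real.exp (-k * u j) * u j * π := by
          intro j
          simp only [Function.comp_apply, pow_one]
          field_simp
        have h4 := h2.mul_const (π / k)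
        rw [show (0:ℝ) * (π / k) = 0 by ring] at h4
        exact h4.congr h3
      · exact (tendsto_const_nhds.sub hexp0').div_const k
    have hfin := ge_of_tendsto hT hev
    calc ‖P - sPhi (f z)‖ ≤ 0 + 0 + (Real.exp (-k * r) - 0) / k := hfin
      _ = 1 / k * Real.exp (-k * r) := by ring
  -- extend to all of A by continuity
  have hkeyA : ∀ z ∈ A, ‖P - sPhi (f z)‖ ≤ 1 / k * Real.exp (-k * r₀) := by
    intro z hzA
    have hbound : ∀ w ∈ S, ‖P - sPhi (f w)‖ ≤ 1 / k * Real.exp (-k * ‖w‖) :=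
      hkey
    obtain ⟨r, θ, h1, h2, hzeq⟩ := hA ▸ hzA
    have hrpos : 0 < r := hr₀.trans h1
    set θj : ℕ → ℝ := fun j => π + (1 - 1 / ((j:ℝ) + 1)) * (θ - π) with hθj_def
    have hfrac : ∀ j : ℕ, 0 ≤ 1 - 1 / ((j:ℝ) + 1) ∧ 1 - 1 / ((j:ℝ) + 1) < 1 := by
      intro j
      have hj1 : (0:ℝ) < (j:ℝ) + 1 := by positivity
      constructor
      · have : 1 / ((j:ℝ) + 1) ≤ 1 := by
          rw [div_le_one hj1]
          linarith [Nat.cast_nonneg (α := ℝ) j]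
        linarith
      · have : 0 < 1 / ((j:ℝ) + 1) := by positivity
        linarith
    have hθjlt : ∀ j, |θj j - π| < π / 2 - ε := by
      intro j
      have h := hfrac j
      have : θj j - π = (1 - 1 / ((j:ℝ) + 1)) * (θ - π) := by rw [hθj_def]; ring
      rw [this, abs_mul, _root_.abs_of_nonneg h.1]
      calc (1 - 1 / ((j:ℝ) + 1)) * |θ - π| ≤ (1 - 1 / ((j:ℝ) + 1)) * (π / 2 - ε) :=
          mul_le_mul_of_nonneg_left h2 h.1
        _ < 1 * (π / 2 - ε) := by
            apply mul_lt_mul_of_pos_right h.2 hc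
        _ = π / 2 - ε := one_mul _
    set zj : ℕ → ℂ := fun j => (r : ℂ) * Complex.exp ((θj j : ℂ) * Complex.I) with hzj_def
    have hzjS : ∀ j, zj j ∈ S := fun j => hmemS r (θj j) h1 (hθjlt j)
    have hzjabs : ∀ j, ‖zj j‖ = r := fun j =>
      hSabs r (θj j) hrpos ((hθjlt j).le.trans hc2)
    have hzjbound : ∀ j, ‖P - sPhi (f (zj j))‖ ≤ 1 / k * Real.exp (-k * r₀) := by
      intro j
      calc ‖P - sPhi (f (zj j))‖ ≤ 1 / k * Real.exp (-k * ‖zj j‖) :=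
          hkey (zj j) (hzjS j)
        _ = 1 / k * Real.exp (-k * r) := by rw [hzjabs j]
        _ ≤ 1 / k * Real.exp (-k * r₀) := by
            apply mul_le_mul_of_nonneg_left (Real.exp_le_exp.mpr (by nlinarith)) (by positivity)
    -- zj → z
    have hθjtend : Filter.Tendsto θj Filter.atTop (nhds θ) := by
      have h0 : Filter.Tendsto (fun j : ℕ => 1 / ((j:ℝ) + 1)) Filter.atTop (nhds 0) :=
        tendsto_one_div_add_atTop_nhds_zero_nat
      have h1' : Filter.Tendsto θj Filter.atTop (nhds (π + (1 - 0) * (θ - π))) := by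
        apply Filter.Tendsto.const_add
        exact (tendsto_const_nhds.sub h0).mul_const _
      simpa using h1'
    have hzjtend : Filter.Tendsto zj Filter.atTop (nhds z) := by
      have hcont : Continuous (fun ψ : ℝ => (r : ℂ) * Complex.exp ((ψ : ℂ) * Complex.I)) :=
        continuous_const.mul ((Complex.continuous_ofReal.mul continuous_const).cexp)
      have := (hcont.tendsto θ).comp hθjtend
      rw [hzeq]
      exact this
    have hfz : Filter.Tendsto (fun j => f (zj j)) Filter.atTop (nhds (f z)) := by
      have hcw : ContinuousWithinAt f A z := hf.continuousOn z hzA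
      apply hcw.tendsto.comp
      rw [tendsto_nhdsWithin_iff]
      exact ⟨hzjtend, Filter.Eventually.of_forall (fun j => hS_sub_A (hzjS j))⟩
    have hnorm_tend : Filter.Tendsto (fun j => ‖P - sPhi (f (zj j))‖) Filter.atTop
        (nhds ‖P - sPhi (f z)‖) :=
      (tendsto_const_nhds.sub ((sPhi_continuous.tendsto _).comp hfz)).norm
    exact le_of_tendsto hnorm_tend (Filter.Eventually.of_forall hzjbound)
  -- conclude
  rcases sPhi_surj hPnorm with hN | ⟨w, hw⟩
  · refine ⟨none, fun z hz => ?_⟩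
    have : sphChordal none (some (f z)) = ‖P - sPhi (f z)‖ := by
      rw [hN, norm_sub_sNorth]
      simp [sphChordal]
    rw [this]
    exact hkeyA z hz
  · refine ⟨some w, fun z hz => ?_⟩
    have : sphChordal (some w) (some (f z)) = ‖P - sPhi (f z)‖ := by
      rw [← hw, norm_sub_sPhi]
      simp [sphChordal]
    rw [this]
    exact hkeyA z hz
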